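/- Let A be a 3×3 real matrix. If A is a semimonotone matrix of exact order 2 (an E0_2-matrix), then A is a Q_0-matrix; that is, for every q ∈ ℝ^3, if there exists z ≥ 0 with q + Az ≥ 0, then there exists z ≥ 0 with q + Az ≥ 0 and zᵀ(q + Az) = 0. -/

import Mathlib

open Matrix

/-- A real square matrix `A` is semimonotone if for every nonzero entrywise-nonnegative
vector `x` there is an index `i` with `x i > 0` and `(A *ᵥ x) i ≥ 0`. -/
def SemiMonotone {ι : Type*} [Fintype ι] (A : Matrix ι ι ℝ) : Prop :=
  ∀ x : ι → ℝ, x ≠ 0 → 0 ≤ x → ∃ i, 0 < x i ∧ 0 ≤ A.mulVec x i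

/-- A real square matrix `A` is strictly semimonotone if for every nonzero
entrywise-nonnegative vector `x` there is an index `i` with `x i > 0` and `(A *ᵥ x) i > 0`. -/
def StrictlySemiMonotone {ι : Type*} [Fintype ι] (A : Matrix ι ι ℝ) : Prop :=
  ∀ x : ι → ℝ, x ≠ 0 → 0 ≤ x → ∃ i, 0 < x i ∧ 0 < A.mulVec x i

/-- The principal submatrix of `A` with rows and columns indexed by `s`. -/
def PrincipalSubmatrix {n : ℕ} (A : Matrix (Fin n) (Fin n) ℝ) (s : Finset (Fin n)) :
    Matrix s s ℝ := A.submatrix (fun i => (i : Fin n)) (fun j => (j : Fin n))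

/-- `A` is a semimonotone matrix of exact order `k` (an `E0_k`-matrix): every principal
submatrix of order `n - k` is semimonotone, but no principal submatrix of order
`r` with `n - k < r ≤ n` is semimonotone. -/
def SemimonotoneExactOrder {n : ℕ} (A : Matrix (Fin n) (Fin n) ℝ) (k : ℕ) : Prop :=
  (∀ s : Finset (Fin n), s.card = n - k → SemiMonotone (PrincipalSubmatrix A s)) ∧
  (∀ s : Finset (Fin n), n - k < s.card → ¬ SemiMonotone (PrincipalSubmatrix A s))

/-- `A` is a strictly semimonotone matrix of exact order `k` (an `E_k`-matrix). -/
def StrictlySemimonotoneExactOrder {n : ℕ} (A : Matrix (Fin n) (Fin n) ℝ) (k : ℕ) : Prop :=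
  (∀ s : Finset (Fin n), s.card = n - k → StrictlySemiMonotone (PrincipalSubmatrix A s)) ∧
  (∀ s : Finset (Fin n), n - k < s.card → ¬ StrictlySemiMonotone (PrincipalSubmatrix A s))

set_option linter.unnecessarySeqFocus false in
set_option maxHeartbeats 1000000 in
theorem stmt5 (A : Matrix (Fin 3) (Fin 3) ℝ) (hA : SemimonotoneExactOrder A 2) :
    ∀ q : Fin 3 → ℝ, (∃ z : Fin 3 → ℝ, 0 ≤ z ∧ 0 ≤ q + A.mulVec z) →
      ∃ z : Fin 3 → ℝ, 0 ≤ z ∧ 0 ≤ q + A.mulVec z ∧ z ⬝ᵥ (q + A.mulVec z) = 0 := by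
  -- Step 1: diagonal entries are nonnegative
  have hdiag : ∀ i : Fin 3, 0 ≤ A i i := by
    intro i
    have hs : ({i} : Finset (Fin 3)).card = 3 - 2 := by simp
    obtain ⟨p, hp, hmv⟩ := hA.1 {i} hs (fun _ => 1) (by
        intro h
        have := congrFun h ⟨i, by simp⟩
        simp at this) (fun _ => zero_le_one)
    have hpi : (p : Fin 3) = i := by
      have := p.2; rwa [Finset.mem_singleton] at this
    have huniv : (Finset.univ : Finset ({i} : Finset (Fin 3))) = {⟨i, by simp⟩} := by
      ext r
      have := r.2; rw [Finset.mem_singleton] at this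
      simp [Subtype.ext_iff, this]
    rw [Matrix.mulVec, dotProduct] at hmv
    rw [huniv, Finset.sum_singleton] at hmv
    simpa [PrincipalSubmatrix, Matrix.submatrix, hpi] using hmv
  -- Step 2: off-diagonal entries are nonpositive (A is a Z-matrix)
  have hoff : ∀ i j : Fin 3, i ≠ j → A i j ≤ 0 := by
    intro i j hij
    have hcard : ({i, j} : Finset (Fin 3)).card = 2 := Finset.card_pair hij
    have hns : ¬ SemiMonotone (PrincipalSubmatrix A ({i, j} : Finset (Fin 3))) :=
      hA.2 {i, j} (by rw [hcard]; norm_num)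
    set s : Finset (Fin 3) := {i, j} with hsdef
    unfold SemiMonotone at hns
    push_neg at hns
    obtain ⟨x, hx0, hxnn, hall⟩ := hns
    have hmi : i ∈ s := by simp [hsdef]
    have hmj : j ∈ s := by simp [hsdef]
    set pi : s := ⟨i, hmi⟩
    set pj : s := ⟨j, hmj⟩
    have hcases : ∀ p : s, p = pi ∨ p = pj := by
      intro p
      have hp : (p : Fin 3) ∈ ({i, j} : Finset (Fin 3)) := p.2
      rcases Finset.mem_insert.mp hp with h | h
      · exact Or.inl (Subtype.ext h)
      · exact Or.inr (Subtype.ext (Finset.mem_singleton.mp h))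
    have hne : pi ≠ pj := fun h => hij (congrArg Subtype.val h)
    have huniv : (Finset.univ : Finset s) = {pi, pj} := by
      ext p; rcases hcases p with h | h <;> simp [h]
    have hmv : ∀ p : s, (PrincipalSubmatrix A s).mulVec x p
        = A p i * x pi + A p j * x pj := by
      intro p
      rw [Matrix.mulVec, dotProduct, huniv, Finset.sum_pair hne]
      rfl
    have hfail : ∀ p : s, 0 < x p → A p i * x pi + A p j * x pj < 0 := by
      intro p hp
      have h2 := hall p hp
      rw [hmv p] at h2
      exact h2
    have hxnn' : ∀ p : s, 0 ≤ x p := fun p => hxnn p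
    have hpjpos : 0 < x pj := by
      rcases lt_or_eq_of_le (hxnn' pj) with h | h
      · exact h
      · exfalso
        have hpipos : 0 < x pi := by
          rcases lt_or_eq_of_le (hxnn' pi) with h2 | h2
          · exact h2
          · exact absurd (funext fun p => by
              rcases hcases p with hh | hh <;> simp [hh, ← h, ← h2]) hx0
        have h3 := hfail pi hpipos
        rw [← h] at h3
        nlinarith [hdiag i]
    have hpipos : 0 < x pi := by
      rcases lt_or_eq_of_le (hxnn' pi) with h | h
      · exact h
      · exfalso
        have h3 := hfail pj hpjpos
        rw [← h] at h3
        nlinarith [hdiag j]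
    have h3 := hfail pi hpipos
    nlinarith [hdiag i]
  -- Step 3: Z-matrices make feasible LCPs solvable
  rintro q ⟨z0, hz0, hw0⟩
  set T : Set (Fin 3 → ℝ) := Set.Icc 0 z0 ∩ {z | 0 ≤ q + A.mulVec z} with hT
  have hz0T : z0 ∈ T := ⟨⟨hz0, le_refl _⟩, hw0⟩
  have hC : IsClosed {z : Fin 3 → ℝ | 0 ≤ q + A.mulVec z} := by
    have : {z : Fin 3 → ℝ | 0 ≤ q + A.mulVec z}
        = ⋂ i, {z | 0 ≤ q i + A.mulVec z i} := by
      ext z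
      simp [Pi.le_def]
    rw [this]
    refine isClosed_iInter fun i => isClosed_le continuous_const ?_
    exact continuous_const.add (by
      simp only [Matrix.mulVec, dotProduct]
      exact continuous_finset_sum _ fun j _ => (continuous_const.mul (continuous_apply j)))
  have hTcomp : IsCompact T := isCompact_Icc.inter_right hC
  have hfc : Continuous (fun z : Fin 3 → ℝ => ∑ i, z i) :=
    continuous_finset_sum _ fun i _ => continuous_apply i
  obtain ⟨zh, hzhT, hmin⟩ := hTcomp.exists_isMinOn ⟨z0, hz0T⟩ hfc.continuousOn
  have hzh0 : 0 ≤ zh := hzhT.1.1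
  have hwnn : 0 ≤ q + A.mulVec zh := hzhT.2
  refine ⟨zh, hzh0, hwnn, ?_⟩
  by_contra hne
  set w : Fin 3 → ℝ := q + A.mulVec zh with hw
  have hdotnn : 0 ≤ zh ⬝ᵥ w :=
    Finset.sum_nonneg fun i _ => mul_nonneg (hzh0 i) (hwnn i)
  have hdotpos : 0 < zh ⬝ᵥ w := lt_of_le_of_ne hdotnn (Ne.symm hne)
  have : ∃ i, 0 < zh i * w i := by
    by_contra hc
    push_neg at hc
    have : zh ⬝ᵥ w ≤ 0 := Finset.sum_nonpos fun i _ => hc i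
    linarith
  obtain ⟨i, hi⟩ := this
  have hzi : 0 < zh i := by
    rcases lt_or_eq_of_le (hzh0 i) with h | h
    · exact h
    · exfalso; rw [← h] at hi; simp at hi
  have hwi : 0 < w i := by
    rcases lt_or_eq_of_le (hwnn i) with h | h
    · exact h
    · exfalso; rw [← h] at hi; simp at hi
  set M : ℝ := |A i i| + 1 with hM
  have hMpos : 0 < M := by positivity
  set ε : ℝ := min (zh i) (w i / M) with hε
  have hεpos : 0 < ε := lt_min hzi (div_pos hwi hMpos)
  set z' : Fin 3 → ℝ := fun k => zh k - ε * (if k = i then 1 else 0) with hz'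
  have hmv : ∀ j, A.mulVec z' j = A.mulVec zh j - ε * A j i := by
    intro j
    simp only [Matrix.mulVec, dotProduct, hz']
    calc ∑ x, A j x * (zh x - ε * if x = i then 1 else 0)
        = ∑ x, (A j x * zh x - (if x = i then A j x * ε else 0)) :=
          Finset.sum_congr rfl (fun x _ => by by_cases hx : x = i <;> simp [hx] <;> ring)
      _ = (∑ x, A j x * zh x) - ∑ x, (if x = i then A j x * ε else 0) :=
          Finset.sum_sub_distrib _ _
      _ = (∑ x, A j x * zh x) - ε * A j i := by
          rw [Finset.sum_ite_eq' Finset.univ i (fun k => A j k * ε)]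
          simp [mul_comm]
  have hz'T : z' ∈ T := by
    refine ⟨⟨fun k => ?_, fun k => ?_⟩, fun k => ?_⟩
    · by_cases hk : k = i
      · subst hk
        have h5 : ε ≤ zh k := min_le_left _ _
        show (0:ℝ) ≤ z' k
        simp only [hz', eq_self_iff_true, if_true, if_pos rfl, mul_one]
        linarith
      · show (0:ℝ) ≤ z' k
        simp only [hz', if_neg hk, mul_zero, sub_zero]
        exact hzh0 k
    · have : z' k ≤ zh k := by
        by_cases hk : k = i <;> simp [hz', hk]
        linarith [hεpos.le]
      exact le_trans this (hzhT.1.2 k)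
    · show 0 ≤ q k + A.mulVec z' k
      rw [hmv k]
      by_cases hk : k = i
      · subst hk
        have h1 : ε * A k k ≤ ε * M := by
          have : A k k ≤ M := by rw [hM]; have := le_abs_self (A k k); linarith
          exact mul_le_mul_of_nonneg_left this hεpos.le
        have h2 : ε * M ≤ w k := by
          have : ε ≤ w k / M := min_le_right _ _
          calc ε * M ≤ (w k / M) * M := mul_le_mul_of_nonneg_right this hMpos.le
            _ = w k := by field_simp
        have hwk : w k = q k + A.mulVec zh k := rfl
        linarith
      · have h1 : ε * A k i ≤ 0 :=
          mul_nonpos_of_nonneg_of_nonpos hεpos.le (hoff k i hk)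
        have hwk : (0:ℝ) ≤ q k + A.mulVec zh k := hwnn k
        linarith
  have hlt : ∑ k, z' k < ∑ k, zh k := by
    have : ∑ k, z' k = (∑ k, zh k) - ε := by
      simp only [hz']
      rw [Finset.sum_sub_distrib]
      congr 1
      rw [← Finset.mul_sum, Finset.sum_ite_eq' Finset.univ i (fun _ => (1:ℝ))]
      simp
    linarith
  exact absurd (hmin hz'T) (by simpa using hlt)
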